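/- The member state choice rule Ĉ_m satisfies early filling: for any set of contracts X', if a contract x = (a, m, w) is accepted and another contract x' = (a, m, w') with w' < w is in X' but not accepted, then the number of accepted asylum seekers at wait time w' with priority higher than a equals the capacity r^{w'}_m (i.e., a does not qualify for the lower wait time). -/

import Mathlib

/-- A contract at a fixed member state: `(asylum seeker, wait time)`.
Asylum seekers are labelled by naturals; `π a` is the priority rank of `a`
(smaller rank = higher priority); wait times are naturals. -/
abbrev Ctr := ℕ × ℕ

open Classical in
/-- Pick, from a nonempty set of contracts, the lowest-wait-time contract of the
highest-priority asylum seeker (lexicographic minimum of (rank, wait, agent)). -/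
noncomputable def pick (π : ℕ → ℕ) (Z : Finset Ctr) (h : Z.Nonempty) : Ctr :=
  let k := (Z.image fun x => toLex ((π x.1 : ℕ), toLex (x.2, x.1))).min'
    (h.image _)
  ((ofLex (ofLex k).2).2, (ofLex (ofLex k).2).1)

open Classical in
/-- One run of the greedy algorithm with fuel.  `excl = true` excludes all
contracts of already accepted asylum seekers (the rule `Ĉ_m`), `excl = false`
excludes only already accepted contracts (the completion `Ĉ'_m`). -/
noncomputable def run (s : ℕ → ℕ) (q : ℕ) (r π : ℕ → ℕ) (excl : Bool)
    (X' : Finset Ctr) : ℕ → Finset Ctr → Finset Ctr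
  | 0, acc => acc
  | n+1, acc =>
    let Z : Finset Ctr := X'.filter fun x =>
      (acc.filter fun y => y.2 = x.2).card < r x.2 ∧
      (excl = true → ∀ y ∈ acc, y.1 ≠ x.1) ∧
      (excl = false → x ∉ acc)
    if q ≤ acc.sum (fun x => s x.1) then acc
    else if h : Z.Nonempty then
      run s q r π excl X' n (insert (pick π Z h) acc)
    else acc

/-- The member state choice rule `Ĉ_m`. -/
noncomputable def Chat (s : ℕ → ℕ) (q : ℕ) (r π : ℕ → ℕ)
    (X' : Finset Ctr) : Finset Ctr :=
  run s q r π true X' (X'.card + 1) ∅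

/-- The completion `Ĉ'_m` of the member state choice rule. -/
noncomputable def Chat' (s : ℕ → ℕ) (q : ℕ) (r π : ℕ → ℕ)
    (X' : Finset Ctr) : Finset Ctr :=
  run s q r π false X' (X'.card + 1) ∅

/- development -/
def key (π : ℕ → ℕ) (x : Ctr) : Lex (ℕ × Lex (ℕ × ℕ)) :=
  toLex (π x.1, toLex (x.2, x.1))

lemma pick_spec (π : ℕ → ℕ) (Z : Finset Ctr) (h : Z.Nonempty) :
    pick π Z h ∈ Z ∧ ∀ z ∈ Z, key π (pick π Z h) ≤ key π z := by
  classical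
  have hmem := Finset.min'_mem (Z.image fun x => toLex ((π x.1 : ℕ), toLex (x.2, x.1))) (h.image _)
  obtain ⟨x₀, hx₀, hkey⟩ := Finset.mem_image.mp hmem
  have hp : pick π Z h = x₀ := by
    unfold pick
    rw [← hkey]
    rfl
  constructor
  · rw [hp]; exact hx₀
  · intro z hz
    rw [hp]
    have := Finset.min'_le (Z.image fun x => toLex ((π x.1 : ℕ), toLex (x.2, x.1)))
      _ (Finset.mem_image_of_mem _ hz)
    rw [← hkey] at this
    exact this

section Main

variable (s : ℕ → ℕ) (q : ℕ) (r π : ℕ → ℕ) (X' : Finset Ctr)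

/-- count of contracts at wait time `w`. -/
def cnt (acc : Finset Ctr) (w : ℕ) : ℕ := (acc.filter fun y => y.2 = w).card

/-- the available set at state `acc` (for `excl = true`). -/
noncomputable def Zs (acc : Finset Ctr) : Finset Ctr :=
  X'.filter fun x =>
    (acc.filter fun y => y.2 = x.2).card < r x.2 ∧
    ((true : Bool) = true → ∀ y ∈ acc, y.1 ≠ x.1) ∧
    ((true : Bool) = false → x ∉ acc)

lemma mem_Zs {acc : Finset Ctr} {x : Ctr} :
    x ∈ Zs r X' acc ↔ x ∈ X' ∧ cnt acc x.2 < r x.2 ∧ ∀ y ∈ acc, y.1 ≠ x.1 := by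
  simp [Zs, cnt]

lemma run_succ (excl : Bool) (n : ℕ) (acc : Finset Ctr) :
    run s q r π excl X' (n+1) acc =
    (let Z : Finset Ctr := X'.filter fun x =>
      (acc.filter fun y => y.2 = x.2).card < r x.2 ∧
      (excl = true → ∀ y ∈ acc, y.1 ≠ x.1) ∧
      (excl = false → x ∉ acc)
    if q ≤ acc.sum (fun x => s x.1) then acc
    else if h : Z.Nonempty then
      run s q r π excl X' n (insert (pick π Z h) acc)
    else acc) := by
  rw [run]

lemma cnt_mono {acc acc' : Finset Ctr} (h : acc ⊆ acc') (w : ℕ) :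
    cnt acc w ≤ cnt acc' w :=
  Finset.card_le_card (Finset.filter_subset_filter _ h)

lemma Zs_anti {acc acc' : Finset Ctr} (h : acc ⊆ acc') : Zs r X' acc' ⊆ Zs r X' acc := by
  intro z hz
  rw [mem_Zs] at hz ⊢
  exact ⟨hz.1, lt_of_le_of_lt (cnt_mono h _) hz.2.1, fun y hy => hz.2.2 y (h hy)⟩

lemma cnt_insert {p : Ctr} {acc : Finset Ctr} (hp : cnt acc p.2 < r p.2)
    (hA : ∀ w, cnt acc w ≤ r w) : ∀ w, cnt (insert p acc) w ≤ r w := by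
  intro w
  unfold cnt
  rw [Finset.filter_insert]
  split_ifs with hw
  · calc (insert p (acc.filter fun y => y.2 = w)).card
        ≤ (acc.filter fun y => y.2 = w).card + 1 := Finset.card_insert_le _ _
      _ ≤ r w := by subst hw; exact hp
  · exact hA w

lemma run_subset (excl : Bool) : ∀ (n : ℕ) (acc : Finset Ctr),
    acc ⊆ run s q r π excl X' n acc := by
  intro n
  induction n with
  | zero => intro acc; rw [run]
  | succ n ih =>
    intro acc
    rw [run_succ]
    dsimp only
    split_ifs with h1 h2
    · rfl
    · exact (Finset.subset_insert _ _).trans (ih _)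
    · rfl

lemma run_cnt (excl : Bool) : ∀ (n : ℕ) (acc : Finset Ctr),
    (∀ w, cnt acc w ≤ r w) → ∀ w, cnt (run s q r π excl X' n acc) w ≤ r w := by
  intro n
  induction n with
  | zero => intro acc hA w; rw [run]; exact hA w
  | succ n ih =>
    intro acc hA w
    rw [run_succ]
    dsimp only
    split_ifs with h1 h2
    · exact hA w
    · have hpZ := (pick_spec π _ h2).1
      have hlt := (Finset.mem_filter.mp hpZ).2.1
      exact ih _ (cnt_insert r hlt hA) w
    · exact hA w

lemma key_le_first {a b : Ctr} (h : key π a ≤ key π b) : π a.1 ≤ π b.1 := by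
  rcases Prod.Lex.le_iff.1 h with h | h
  · exact le_of_lt h
  · exact le_of_eq h.1

lemma key_lt_of {x x' : Ctr} (h1 : x'.1 = x.1) (h2 : x'.2 < x.2) :
    key π x' < key π x := by
  refine (Prod.Lex.lt_iff (x := key π x') (y := key π x)).2 (Or.inr ⟨by simp [key, h1], ?_⟩)
  exact Prod.Lex.lt_iff.2 (Or.inl h2)

lemma run_main (hπ : Function.Injective π) : ∀ (n : ℕ) (acc : Finset Ctr),
    (∀ w, cnt acc w ≤ r w) →
    (∀ y ∈ acc, ∀ z ∈ X', cnt acc z.2 < r z.2 → (∀ y' ∈ acc, y'.1 ≠ z.1) →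
      key π y ≤ key π z) →
    ∀ x ∈ run s q r π true X' n acc, x ∉ acc →
    ∀ x' ∈ X', x'.1 = x.1 → x'.2 < x.2 →
    ((run s q r π true X' n acc).filter fun y => y.2 = x'.2 ∧ π y.1 < π x.1).card
      = r x'.2 := by
  intro n
  induction n with
  | zero => intro acc _ _ x hx hxa; rw [run] at hx; exact absurd hx hxa
  | succ n ih =>
    intro acc hA hord x hx hxa x' hx' hag hw
    rw [run_succ] at hx ⊢
    dsimp only at hx ⊢
    split_ifs at hx ⊢ with h1 h2
    · exact absurd hx hxa
    · set p := pick π _ h2 with hp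
      have hpZ := (pick_spec π _ h2).1
      have hmin0 := (pick_spec π _ h2).2
      rw [Finset.mem_filter] at hpZ
      have hpX : p ∈ X' := hpZ.1
      have hpc : cnt acc p.2 < r p.2 := hpZ.2.1
      have hpag : ∀ y ∈ acc, y.1 ≠ p.1 := hpZ.2.2.1 rfl
      have hmin : ∀ z ∈ X', cnt acc z.2 < r z.2 → (∀ y' ∈ acc, y'.1 ≠ z.1) →
          key π p ≤ key π z := by
        intro z hz1 hz2 hz3
        exact hmin0 z (Finset.mem_filter.mpr ⟨hz1, hz2, fun _ => hz3, fun h => by simp at h⟩)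
      have hA' : ∀ w, cnt (insert p acc) w ≤ r w := cnt_insert r hpc hA
      by_cases hxp : x = p
      · subst hxp
        have hc : cnt acc x'.2 = r x'.2 := by
          have hnlt : ¬ cnt acc x'.2 < r x'.2 := by
            intro hlt
            have := hmin x' hx' hlt (fun y hy => hag ▸ hpag y hy)
            exact absurd (key_lt_of π hag hw) (not_lt.2 this)
          exact le_antisymm (hA _) (not_lt.1 hnlt)
        have hhi : ∀ y ∈ acc, π y.1 < π p.1 := by
          intro y hy
          have hle : π y.1 ≤ π p.1 := key_le_first π (hord y hy p hpX hpc hpag)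
          exact lt_of_le_of_ne hle fun he => hpag y hy (hπ he)
        have hacc : (acc.filter fun y => y.2 = x'.2 ∧ π y.1 < π p.1).card = r x'.2 := by
          rw [show (acc.filter fun y => y.2 = x'.2 ∧ π y.1 < π p.1)
              = acc.filter (fun y => y.2 = x'.2) from
            Finset.filter_congr fun y hy => by simp [hhi y hy]]
          exact hc
        have hsub : acc ⊆ run s q r π true X' n (insert p acc) :=
          (Finset.subset_insert _ _).trans (run_subset s q r π X' true n _)
        refine le_antisymm ?_ ?_
        · calc ((run s q r π true X' n (insert p acc)).filter
              fun y => y.2 = x'.2 ∧ π y.1 < π p.1).card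
              ≤ cnt (run s q r π true X' n (insert p acc)) x'.2 :=
              Finset.card_le_card (fun y hy => by
                simp only [Finset.mem_filter] at hy ⊢
                exact ⟨hy.1, hy.2.1⟩)
            _ ≤ r x'.2 := run_cnt s q r π X' true n _ hA' _
        · rw [← hacc]
          exact Finset.card_le_card (Finset.filter_subset_filter _ hsub)
      · refine ih (insert p acc) hA' ?_ x hx ?_ x' hx' hag hw
        · intro y hy z hz1 hz2 hz3
          have hz2' : cnt acc z.2 < r z.2 :=
            lt_of_le_of_lt (cnt_mono (Finset.subset_insert _ _) _) hz2
          have hz3' : ∀ y' ∈ acc, y'.1 ≠ z.1 :=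
            fun y' hy' => hz3 y' (Finset.mem_insert_of_mem hy')
          rcases Finset.mem_insert.1 hy with rfl | hy'
          · exact hmin z hz1 hz2' hz3'
          · exact hord y hy' z hz1 hz2' hz3'
        · simp only [Finset.mem_insert]
          rintro (rfl | h)
          · exact hxp rfl
          · exact hxa h
    · exact absurd hx hxa

end Main

/-- early filling: if a contract of asylum seeker `a` is
accepted while a lower-wait-time contract of `a` in `X'` is not, then `a` does
not qualify for the lower wait time: the higher-priority accepted contracts at
that wait time exactly fill the capacity. -/
theorem chat_earlyFilling (s : ℕ → ℕ) (q : ℕ) (r π : ℕ → ℕ)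
    (hπ : Function.Injective π) (X' : Finset Ctr) (x x' : Ctr)
    (hx : x ∈ Chat s q r π X') (hx' : x' ∈ X') (hagent : x'.1 = x.1)
    (hwait : x'.2 < x.2) (hrej : x' ∉ Chat s q r π X') :
    ((Chat s q r π X').filter fun y => y.2 = x'.2 ∧ π y.1 < π x.1).card = r x'.2 := by
  exact run_main s q r π X' hπ (X'.card + 1) ∅
    (fun w => by simp [cnt]) (by simp)
    x hx (by simp) x' hx' hagent hwait
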